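/- Fix a real constant α. Let Ĝ(R, v) be a smooth real-valued function of two real variables on an open set, and define G(w, w̄, v) := Ĝ(ln(w w̄), v) on the corresponding open subset of (ℂ \ {0}) × ℝ. Then G satisfies equation (alterform) if and only if Ĝ satisfies (Ĝ + Ĝ_{vv} − 2 sin α · Ĝ_v) Ĝ_{RR} − (e^{iα} Ĝ_R − i Ĝ_{vR})(e^{−iα} Ĝ_R + i Ĝ_{vR}) = 4 e^{R}. -/

import Mathlib

noncomputable section

/-- Wirtinger derivative ∂_w of a complex-valued function of (w, v) ∈ ℂ × ℝ. -/
def dw (G : ℂ → ℝ → ℂ) : ℂ → ℝ → ℂ := fun w v =>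
  ((fderiv ℝ (fun z => G z v) w 1) - Complex.I * (fderiv ℝ (fun z => G z v) w Complex.I)) / 2

/-- Wirtinger derivative ∂_{w̄} of a complex-valued function of (w, v) ∈ ℂ × ℝ. -/
def dwb (G : ℂ → ℝ → ℂ) : ℂ → ℝ → ℂ := fun w v =>
  ((fderiv ℝ (fun z => G z v) w 1) + Complex.I * (fderiv ℝ (fun z => G z v) w Complex.I)) / 2

/-- Partial derivative ∂_v of a complex-valued function of (w, v) ∈ ℂ × ℝ. -/
def dv (G : ℂ → ℝ → ℂ) : ℂ → ℝ → ℂ := fun w v => deriv (fun t => G w t) v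

/-- A real-valued function of (w, v), viewed as complex-valued. -/
def cx (G : ℂ → ℝ → ℝ) : ℂ → ℝ → ℂ := fun w v => (G w v : ℂ)

/-- Equation (alterform) at the point (w, v):
(G + G_{vv} − 2 G_v sin α) G_{ww̄}
  − (e^{iα} G_{w̄} − i G_{vw̄})(e^{−iα} G_w + i G_{vw}) = 4. -/
def Alterform (α : ℝ) (G : ℂ → ℝ → ℝ) (w : ℂ) (v : ℝ) : Prop :=
  (cx G w v + dv (dv (cx G)) w v - 2 * dv (cx G) w v * (Real.sin α : ℂ))
      * dwb (dw (cx G)) w v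
    - (Complex.exp (Complex.I * (α : ℂ)) * dwb (cx G) w v
        - Complex.I * dwb (dv (cx G)) w v)
      * (Complex.exp (-(Complex.I * (α : ℂ))) * dw (cx G) w v
        + Complex.I * dw (dv (cx G)) w v)
    = 4

/-- Partial derivatives of a function Ĝ(R, v) of two real variables. -/
def pR (H : ℝ → ℝ → ℝ) : ℝ → ℝ → ℝ := fun R v => deriv (fun s => H s v) R
def pv (H : ℝ → ℝ → ℝ) : ℝ → ℝ → ℝ := fun R v => deriv (fun s => H R s) v

open Complex Filter

/-- The ℝ-linear map `u ↦ a * u.re + b * u.im`. -/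
def phiCLM (a b : ℝ) : ℂ →L[ℝ] ℝ := a • Complex.reCLM + b • Complex.imCLM

@[simp] lemma phiCLM_apply (a b : ℝ) (u : ℂ) : phiCLM a b u = a * u.re + b * u.im := by
  simp [phiCLM, smul_eq_mul]

lemma hasFDerivAt_normSq (w : ℂ) :
    HasFDerivAt Complex.normSq (phiCLM (2 * w.re) (2 * w.im)) w := by
  have h1 : HasFDerivAt (fun z : ℂ => z.re) Complex.reCLM w := Complex.reCLM.hasFDerivAt
  have h2 : HasFDerivAt (fun z : ℂ => z.im) Complex.imCLM w := Complex.imCLM.hasFDerivAt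
  have h : HasFDerivAt (fun z : ℂ => z.re * z.re + z.im * z.im) _ w := ((h1.mul h1).add (h2.mul h2))
  have heq : (fun z : ℂ => z.re * z.re + z.im * z.im) = Complex.normSq := by
    funext z; rw [Complex.normSq_apply]
  rw [heq] at h
  refine h.congr_fderiv ?_
  ext u
  simp [smul_eq_mul]
  ring

lemma hasFDerivAt_logNormSq {w : ℂ} (hw : w ≠ 0) :
    HasFDerivAt (fun z : ℂ => Real.log (Complex.normSq z))
      (phiCLM (2 * w.re / Complex.normSq w) (2 * w.im / Complex.normSq w)) w := by
  have hne : Complex.normSq w ≠ 0 := ne_of_gt (Complex.normSq_pos.2 hw)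
  have h := (Real.hasDerivAt_log hne).comp_hasFDerivAt w (hasFDerivAt_normSq w)
  refine h.congr_fderiv ?_
  ext u
  simp [smul_eq_mul]
  ring

lemma comp_hasFDerivAt' (H : ℝ → ℝ) {w : ℂ} (hw : w ≠ 0)
    (hd : DifferentiableAt ℝ H (Real.log (Complex.normSq w))) :
    HasFDerivAt (fun z : ℂ => ((H (Real.log (Complex.normSq z)) : ℝ) : ℂ))
      (Complex.ofRealCLM.comp ((deriv H (Real.log (Complex.normSq w))) •
        phiCLM (2 * w.re / Complex.normSq w) (2 * w.im / Complex.normSq w))) w := by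
  have h1 := (hd.hasDerivAt).comp_hasFDerivAt w (hasFDerivAt_logNormSq hw)
  exact Complex.ofRealCLM.hasFDerivAt.comp w h1

lemma key1 {w : ℂ} (hw : w ≠ 0) :
    ((2 * w.re / Complex.normSq w : ℝ) : ℂ)
      - Complex.I * ((2 * w.im / Complex.normSq w : ℝ) : ℂ) = 2 / w := by
  have hc : (starRingEnd ℂ) w ≠ 0 := star_ne_zero.2 hw
  have hNc : ((Complex.normSq w : ℝ) : ℂ) = w * (starRingEnd ℂ) w := (Complex.mul_conj w).symm
  have hN0 : ((Complex.normSq w : ℝ) : ℂ) ≠ 0 := by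
    exact_mod_cast ne_of_gt (Complex.normSq_pos.2 hw)
  have hre : ((w.re : ℝ) : ℂ) = (w + (starRingEnd ℂ) w) / 2 := by
    rw [Complex.add_conj]; push_cast; ring
  have him : ((w.im : ℝ) : ℂ) * Complex.I = (w - (starRingEnd ℂ) w) / 2 := by
    rw [Complex.sub_conj]; push_cast; ring
  push_cast
  field_simp
  linear_combination w*hre - w*him - hNc

lemma key2 {w : ℂ} (hw : w ≠ 0) :
    ((2 * w.re / Complex.normSq w : ℝ) : ℂ)
      + Complex.I * ((2 * w.im / Complex.normSq w : ℝ) : ℂ) = 2 / (starRingEnd ℂ) w := by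
  have hc : (starRingEnd ℂ) w ≠ 0 := star_ne_zero.2 hw
  have hNc : ((Complex.normSq w : ℝ) : ℂ) = w * (starRingEnd ℂ) w := (Complex.mul_conj w).symm
  have hN0 : ((Complex.normSq w : ℝ) : ℂ) ≠ 0 := by
    exact_mod_cast ne_of_gt (Complex.normSq_pos.2 hw)
  have hre : ((w.re : ℝ) : ℂ) = (w + (starRingEnd ℂ) w) / 2 := by
    rw [Complex.add_conj]; push_cast; ring
  have him : ((w.im : ℝ) : ℂ) * Complex.I = (w - (starRingEnd ℂ) w) / 2 := by
    rw [Complex.sub_conj]; push_cast; ring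
  push_cast
  field_simp
  linear_combination (starRingEnd ℂ w)*hre + (starRingEnd ℂ w)*him - hNc

lemma wdw (H : ℝ → ℝ) {w : ℂ} (hw : w ≠ 0)
    (hd : DifferentiableAt ℝ H (Real.log (Complex.normSq w))) :
    (fderiv ℝ (fun z : ℂ => ((H (Real.log (Complex.normSq z)) : ℝ) : ℂ)) w 1
       - Complex.I * fderiv ℝ (fun z : ℂ => ((H (Real.log (Complex.normSq z)) : ℝ) : ℂ)) w
         Complex.I) / 2
      = ((deriv H (Real.log (Complex.normSq w)) : ℝ) : ℂ) / w := by
  rw [(comp_hasFDerivAt' H hw hd).fderiv]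
  have k := key1 hw
  set d := deriv H (Real.log (Complex.normSq w)) with hdd
  simp only [ContinuousLinearMap.comp_apply, ContinuousLinearMap.smul_apply, phiCLM_apply,
    Complex.ofRealCLM_apply, Complex.one_re, Complex.one_im, Complex.I_re, Complex.I_im,
    smul_eq_mul]
  push_cast at k ⊢
  field_simp at k ⊢
  linear_combination (d : ℂ) * k

lemma wdwb (H : ℝ → ℝ) {w : ℂ} (hw : w ≠ 0)
    (hd : DifferentiableAt ℝ H (Real.log (Complex.normSq w))) :
    (fderiv ℝ (fun z : ℂ => ((H (Real.log (Complex.normSq z)) : ℝ) : ℂ)) w 1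
       + Complex.I * fderiv ℝ (fun z : ℂ => ((H (Real.log (Complex.normSq z)) : ℝ) : ℂ)) w
         Complex.I) / 2
      = ((deriv H (Real.log (Complex.normSq w)) : ℝ) : ℂ) / (starRingEnd ℂ) w := by
  rw [(comp_hasFDerivAt' H hw hd).fderiv]
  have k := key2 hw
  set d := deriv H (Real.log (Complex.normSq w)) with hdd
  simp only [ContinuousLinearMap.comp_apply, ContinuousLinearMap.smul_apply, phiCLM_apply,
    Complex.ofRealCLM_apply, Complex.one_re, Complex.one_im, Complex.I_re, Complex.I_im,
    smul_eq_mul]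
  push_cast at k ⊢
  field_simp at k ⊢
  linear_combination (d : ℂ) * k

lemma wdwb2 (H : ℝ → ℝ) {w : ℂ} (hw : w ≠ 0)
    (hd : DifferentiableAt ℝ H (Real.log (Complex.normSq w))) :
    (fderiv ℝ (fun z : ℂ => ((H (Real.log (Complex.normSq z)) : ℝ) : ℂ) * z⁻¹) w 1
       + Complex.I * fderiv ℝ (fun z : ℂ => ((H (Real.log (Complex.normSq z)) : ℝ) : ℂ) * z⁻¹) w
         Complex.I) / 2
      = ((deriv H (Real.log (Complex.normSq w)) : ℝ) : ℂ) / ((Complex.normSq w : ℝ) : ℂ) := by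
  have ha := comp_hasFDerivAt' H hw hd
  have hb : HasFDerivAt (fun z : ℂ => z⁻¹)
      ((ContinuousLinearMap.smulRight (1 : ℂ →L[ℂ] ℂ) (-(w ^ 2)⁻¹)).restrictScalars ℝ) w :=
    ((hasDerivAt_inv hw).hasFDerivAt).restrictScalars ℝ
  have h : HasFDerivAt (fun z : ℂ => ((H (Real.log (Complex.normSq z)) : ℝ) : ℂ) * z⁻¹) _ w :=
    ha.mul' hb
  rw [h.fderiv]
  have hc : (starRingEnd ℂ) w ≠ 0 := star_ne_zero.2 hw
  have hNc : ((Complex.normSq w : ℝ) : ℂ) = w * (starRingEnd ℂ) w := (Complex.mul_conj w).symm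
  have hN0 : ((Complex.normSq w : ℝ) : ℂ) ≠ 0 := by
    exact_mod_cast ne_of_gt (Complex.normSq_pos.2 hw)
  have k := key2 hw
  have hI : Complex.I ^ 2 = -1 := Complex.I_sq
  set d := deriv H (Real.log (Complex.normSq w)) with hdd
  set E := H (Real.log (Complex.normSq w)) with hEE
  simp only [ContinuousLinearMap.add_apply, ContinuousLinearMap.coe_smul', Pi.smul_apply,
    ContinuousLinearMap.coe_restrictScalars', ContinuousLinearMap.smulRight_apply,
    ContinuousLinearMap.one_apply, ContinuousLinearMap.comp_apply,
    ContinuousLinearMap.smul_apply, phiCLM_apply, Complex.ofRealCLM_apply,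
    Complex.one_re, Complex.one_im, Complex.I_re, Complex.I_im, smul_eq_mul,
    ContinuousLinearMap.smulRight_apply, op_smul_eq_mul]
  push_cast at k ⊢
  field_simp at k ⊢
  have hwre : ((w.re : ℝ) : ℂ) + ((w.im : ℝ) : ℂ) * Complex.I = w := Complex.re_add_im w
  linear_combination (-(E : ℂ) * ((Complex.normSq w : ℝ) : ℂ)) * hI
    + 2 * (d : ℂ) * w * hwre

section slices
variable {U₂ : Set (ℝ × ℝ)} {H : ℝ → ℝ → ℝ}

lemma sliceR_diff (hU : IsOpen U₂)
    (h : ContDiffOn ℝ (⊤ : ℕ∞) (fun p : ℝ × ℝ => H p.1 p.2) U₂) {R v : ℝ}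
    (hmem : (R, v) ∈ U₂) : DifferentiableAt ℝ (fun s => H s v) R := by
  have h1 : ContDiffAt ℝ (⊤ : ℕ∞) (fun p : ℝ × ℝ => H p.1 p.2) (R, v) :=
    h.contDiffAt (hU.mem_nhds hmem)
  have h2 : ContDiffAt ℝ (⊤ : ℕ∞) (fun s : ℝ => ((s, v) : ℝ × ℝ)) R :=
    (contDiff_id.prodMk contDiff_const).contDiffAt
  exact (h1.comp R h2).differentiableAt (by simp)

lemma sliceV_diff (hU : IsOpen U₂)
    (h : ContDiffOn ℝ (⊤ : ℕ∞) (fun p : ℝ × ℝ => H p.1 p.2) U₂) {R v : ℝ}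
    (hmem : (R, v) ∈ U₂) : DifferentiableAt ℝ (fun t => H R t) v := by
  have h1 : ContDiffAt ℝ (⊤ : ℕ∞) (fun p : ℝ × ℝ => H p.1 p.2) (R, v) :=
    h.contDiffAt (hU.mem_nhds hmem)
  have h2 : ContDiffAt ℝ (⊤ : ℕ∞) (fun t : ℝ => ((R, t) : ℝ × ℝ)) v :=
    (contDiff_const.prodMk contDiff_id).contDiffAt
  exact (h1.comp v h2).differentiableAt (by simp)

lemma pR_eq_fderiv (hU : IsOpen U₂)
    (h : ContDiffOn ℝ (⊤ : ℕ∞) (fun p : ℝ × ℝ => H p.1 p.2) U₂) {p : ℝ × ℝ}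
    (hp : p ∈ U₂) :
    pR H p.1 p.2 = fderiv ℝ (fun p : ℝ × ℝ => H p.1 p.2) p ((1 : ℝ), (0 : ℝ)) := by
  have hdF : HasFDerivAt (fun p : ℝ × ℝ => H p.1 p.2)
      (fderiv ℝ (fun p : ℝ × ℝ => H p.1 p.2) p) p :=
    ((h.contDiffAt (hU.mem_nhds hp)).differentiableAt (by simp)).hasFDerivAt
  have hin : HasDerivAt (fun s : ℝ => ((s, p.2) : ℝ × ℝ)) ((1 : ℝ), (0 : ℝ)) p.1 :=
    (hasDerivAt_id p.1).prodMk (hasDerivAt_const p.1 p.2)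
  have hcomp := hdF.comp_hasDerivAt p.1 hin
  exact hcomp.deriv

lemma pv_eq_fderiv (hU : IsOpen U₂)
    (h : ContDiffOn ℝ (⊤ : ℕ∞) (fun p : ℝ × ℝ => H p.1 p.2) U₂) {p : ℝ × ℝ}
    (hp : p ∈ U₂) :
    pv H p.1 p.2 = fderiv ℝ (fun p : ℝ × ℝ => H p.1 p.2) p ((0 : ℝ), (1 : ℝ)) := by
  have hdF : HasFDerivAt (fun p : ℝ × ℝ => H p.1 p.2)
      (fderiv ℝ (fun p : ℝ × ℝ => H p.1 p.2) p) p :=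
    ((h.contDiffAt (hU.mem_nhds hp)).differentiableAt (by simp)).hasFDerivAt
  have hin : HasDerivAt (fun t : ℝ => ((p.1, t) : ℝ × ℝ)) ((0 : ℝ), (1 : ℝ)) p.2 :=
    (hasDerivAt_const p.2 p.1).prodMk (hasDerivAt_id p.2)
  have hcomp := hdF.comp_hasDerivAt p.2 hin
  exact hcomp.deriv

lemma pR_contDiffOn (hU : IsOpen U₂)
    (h : ContDiffOn ℝ (⊤ : ℕ∞) (fun p : ℝ × ℝ => H p.1 p.2) U₂) :
    ContDiffOn ℝ (⊤ : ℕ∞) (fun p : ℝ × ℝ => pR H p.1 p.2) U₂ := by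
  have hf := h.fderiv_of_isOpen hU (m := (⊤ : ℕ∞)) (by simp)
  have happ : ContDiffOn ℝ (⊤ : ℕ∞)
      (fun p : ℝ × ℝ => fderiv ℝ (fun p : ℝ × ℝ => H p.1 p.2) p ((1 : ℝ), (0 : ℝ))) U₂ :=
    hf.clm_apply contDiffOn_const
  exact happ.congr fun p hp => pR_eq_fderiv hU h hp

lemma pv_contDiffOn (hU : IsOpen U₂)
    (h : ContDiffOn ℝ (⊤ : ℕ∞) (fun p : ℝ × ℝ => H p.1 p.2) U₂) :
    ContDiffOn ℝ (⊤ : ℕ∞) (fun p : ℝ × ℝ => pv H p.1 p.2) U₂ := by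
  have hf := h.fderiv_of_isOpen hU (m := (⊤ : ℕ∞)) (by simp)
  have happ : ContDiffOn ℝ (⊤ : ℕ∞)
      (fun p : ℝ × ℝ => fderiv ℝ (fun p : ℝ × ℝ => H p.1 p.2) p ((0 : ℝ), (1 : ℝ))) U₂ :=
    hf.clm_apply contDiffOn_const
  exact happ.congr fun p hp => pv_eq_fderiv hU h hp

end slices

lemma deriv_ofReal_comp' {f : ℝ → ℝ} {x : ℝ} (hf : DifferentiableAt ℝ f x) :
    deriv (fun t => ((f t : ℝ) : ℂ)) x = ((deriv f x : ℝ) : ℂ) :=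
  (hf.hasDerivAt.ofReal_comp).deriv

lemma equiv_alg {w : ℂ} (hw : w ≠ 0) (P Q S T X Y : ℂ) :
    (P * (Q / ((Complex.normSq w : ℝ) : ℂ))
        - (X * (S / (starRingEnd ℂ) w) - Complex.I * (T / (starRingEnd ℂ) w))
          * (Y * (S / w) + Complex.I * (T / w)) = 4)
      ↔ (P * Q - (X * S - Complex.I * T) * (Y * S + Complex.I * T)
          = 4 * ((Complex.normSq w : ℝ) : ℂ)) := by
  have hc : (starRingEnd ℂ) w ≠ 0 := star_ne_zero.2 hw
  have hNc : ((Complex.normSq w : ℝ) : ℂ) = w * (starRingEnd ℂ) w := (Complex.mul_conj w).symm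
  have hN0 : ((Complex.normSq w : ℝ) : ℂ) ≠ 0 := by
    exact_mod_cast ne_of_gt (Complex.normSq_pos.2 hw)
  have key : P * (Q / ((Complex.normSq w : ℝ) : ℂ))
        - (X * (S / (starRingEnd ℂ) w) - Complex.I * (T / (starRingEnd ℂ) w))
          * (Y * (S / w) + Complex.I * (T / w))
      = (P * Q - (X * S - Complex.I * T) * (Y * S + Complex.I * T))
          / ((Complex.normSq w : ℝ) : ℂ) := by
    rw [hNc]; field_simp
  rw [key, div_eq_iff hN0]

section derivs
variable {U₂ : Set (ℝ × ℝ)} {Ghat : ℝ → ℝ → ℝ}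

lemma hd1 (hU : IsOpen U₂)
    (hG : ContDiffOn ℝ (⊤ : ℕ∞) (fun p : ℝ × ℝ => Ghat p.1 p.2) U₂)
    {w : ℂ} {v : ℝ} (hw : w ≠ 0) (hmem : (Real.log (Complex.normSq w), v) ∈ U₂) :
    dw (cx fun z t => Ghat (Real.log (Complex.normSq z)) t) w v
      = ((pR Ghat (Real.log (Complex.normSq w)) v : ℝ) : ℂ) / w :=
  wdw (fun s => Ghat s v) hw (sliceR_diff hU hG hmem)

lemma hd2 (hU : IsOpen U₂)
    (hG : ContDiffOn ℝ (⊤ : ℕ∞) (fun p : ℝ × ℝ => Ghat p.1 p.2) U₂)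
    {w : ℂ} {v : ℝ} (hw : w ≠ 0) (hmem : (Real.log (Complex.normSq w), v) ∈ U₂) :
    dwb (cx fun z t => Ghat (Real.log (Complex.normSq z)) t) w v
      = ((pR Ghat (Real.log (Complex.normSq w)) v : ℝ) : ℂ) / (starRingEnd ℂ) w :=
  wdwb (fun s => Ghat s v) hw (sliceR_diff hU hG hmem)

lemma hd3 (hU : IsOpen U₂)
    (hG : ContDiffOn ℝ (⊤ : ℕ∞) (fun p : ℝ × ℝ => Ghat p.1 p.2) U₂)
    {w : ℂ} {v : ℝ} (hmem : (Real.log (Complex.normSq w), v) ∈ U₂) :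
    dv (cx fun z t => Ghat (Real.log (Complex.normSq z)) t) w v
      = ((pv Ghat (Real.log (Complex.normSq w)) v : ℝ) : ℂ) :=
  deriv_ofReal_comp' (sliceV_diff hU hG hmem)

lemma hevz (hU : IsOpen U₂) {w : ℂ} {v : ℝ} (hw : w ≠ 0)
    (hmem : (Real.log (Complex.normSq w), v) ∈ U₂) :
    ∀ᶠ z in nhds w, z ≠ 0 ∧ (Real.log (Complex.normSq z), v) ∈ U₂ := by
  have h1 : ∀ᶠ z in nhds w, z ≠ 0 :=
    (isOpen_compl_singleton.eventually_mem (by simpa using hw) : _)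
  have h2 : ContinuousAt (fun z : ℂ => ((Real.log (Complex.normSq z), v) : ℝ × ℝ)) w :=
    (((Real.continuousAt_log (ne_of_gt (Complex.normSq_pos.2 hw))).comp
      Complex.continuous_normSq.continuousAt).prodMk continuousAt_const)
  exact h1.and (h2.eventually_mem (hU.mem_nhds hmem))

lemma hd4 (hU : IsOpen U₂)
    (hG : ContDiffOn ℝ (⊤ : ℕ∞) (fun p : ℝ × ℝ => Ghat p.1 p.2) U₂)
    {w : ℂ} {v : ℝ} (hmem : (Real.log (Complex.normSq w), v) ∈ U₂) :
    dv (dv (cx fun z t => Ghat (Real.log (Complex.normSq z)) t)) w v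
      = ((pv (pv Ghat) (Real.log (Complex.normSq w)) v : ℝ) : ℂ) := by
  have hev : ∀ᶠ t in nhds v, (Real.log (Complex.normSq w), t) ∈ U₂ := by
    have hco : ContinuousAt
        (fun t : ℝ => ((Real.log (Complex.normSq w), t) : ℝ × ℝ)) v :=
      continuousAt_const.prodMk continuousAt_id
    exact hco.eventually_mem (hU.mem_nhds hmem)
  have heq : (fun t => dv (cx fun z t => Ghat (Real.log (Complex.normSq z)) t) w t)
      =ᶠ[nhds v] fun t => ((pv Ghat (Real.log (Complex.normSq w)) t : ℝ) : ℂ) :=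
    hev.mono fun t ht => hd3 hU hG ht
  have h1 : dv (dv (cx fun z t => Ghat (Real.log (Complex.normSq z)) t)) w v
      = deriv (fun t => ((pv Ghat (Real.log (Complex.normSq w)) t : ℝ) : ℂ)) v :=
    heq.deriv_eq
  rw [h1]
  exact deriv_ofReal_comp' (sliceV_diff hU (pv_contDiffOn hU hG) hmem)

lemma hd5 (hU : IsOpen U₂)
    (hG : ContDiffOn ℝ (⊤ : ℕ∞) (fun p : ℝ × ℝ => Ghat p.1 p.2) U₂)
    {w : ℂ} {v : ℝ} (hw : w ≠ 0) (hmem : (Real.log (Complex.normSq w), v) ∈ U₂) :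
    dwb (dv (cx fun z t => Ghat (Real.log (Complex.normSq z)) t)) w v
      = ((pR (pv Ghat) (Real.log (Complex.normSq w)) v : ℝ) : ℂ) / (starRingEnd ℂ) w := by
  have heq : (fun z => dv (cx fun z t => Ghat (Real.log (Complex.normSq z)) t) z v)
      =ᶠ[nhds w] fun z => ((pv Ghat (Real.log (Complex.normSq z)) v : ℝ) : ℂ) :=
    (hevz hU hw hmem).mono fun z hz => hd3 hU hG hz.2
  show (fderiv ℝ (fun z => dv (cx fun z t => Ghat (Real.log (Complex.normSq z)) t) z v) w 1
      + Complex.I * fderiv ℝ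
        (fun z => dv (cx fun z t => Ghat (Real.log (Complex.normSq z)) t) z v) w Complex.I) / 2
      = _
  rw [heq.fderiv_eq]
  exact wdwb (fun s => pv Ghat s v) hw (sliceR_diff hU (pv_contDiffOn hU hG) hmem)

lemma hd6 (hU : IsOpen U₂)
    (hG : ContDiffOn ℝ (⊤ : ℕ∞) (fun p : ℝ × ℝ => Ghat p.1 p.2) U₂)
    {w : ℂ} {v : ℝ} (hw : w ≠ 0) (hmem : (Real.log (Complex.normSq w), v) ∈ U₂) :
    dw (dv (cx fun z t => Ghat (Real.log (Complex.normSq z)) t)) w v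
      = ((pR (pv Ghat) (Real.log (Complex.normSq w)) v : ℝ) : ℂ) / w := by
  have heq : (fun z => dv (cx fun z t => Ghat (Real.log (Complex.normSq z)) t) z v)
      =ᶠ[nhds w] fun z => ((pv Ghat (Real.log (Complex.normSq z)) v : ℝ) : ℂ) :=
    (hevz hU hw hmem).mono fun z hz => hd3 hU hG hz.2
  show (fderiv ℝ (fun z => dv (cx fun z t => Ghat (Real.log (Complex.normSq z)) t) z v) w 1
      - Complex.I * fderiv ℝ
        (fun z => dv (cx fun z t => Ghat (Real.log (Complex.normSq z)) t) z v) w Complex.I) / 2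
      = _
  rw [heq.fderiv_eq]
  exact wdw (fun s => pv Ghat s v) hw (sliceR_diff hU (pv_contDiffOn hU hG) hmem)

lemma hd7 (hU : IsOpen U₂)
    (hG : ContDiffOn ℝ (⊤ : ℕ∞) (fun p : ℝ × ℝ => Ghat p.1 p.2) U₂)
    {w : ℂ} {v : ℝ} (hw : w ≠ 0) (hmem : (Real.log (Complex.normSq w), v) ∈ U₂) :
    dwb (dw (cx fun z t => Ghat (Real.log (Complex.normSq z)) t)) w v
      = ((pR (pR Ghat) (Real.log (Complex.normSq w)) v : ℝ) : ℂ)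
        / ((Complex.normSq w : ℝ) : ℂ) := by
  have heq : (fun z => dw (cx fun z t => Ghat (Real.log (Complex.normSq z)) t) z v)
      =ᶠ[nhds w] fun z => ((pR Ghat (Real.log (Complex.normSq z)) v : ℝ) : ℂ) * z⁻¹ :=
    (hevz hU hw hmem).mono fun z hz => by
      show dw (cx fun z t => Ghat (Real.log (Complex.normSq z)) t) z v
        = ((pR Ghat (Real.log (Complex.normSq z)) v : ℝ) : ℂ) * z⁻¹
      rw [hd1 hU hG hz.1 hz.2, div_eq_mul_inv]
  show (fderiv ℝ (fun z => dw (cx fun z t => Ghat (Real.log (Complex.normSq z)) t) z v) w 1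
      + Complex.I * fderiv ℝ
        (fun z => dw (cx fun z t => Ghat (Real.log (Complex.normSq z)) t) z v) w Complex.I) / 2
      = _
  rw [heq.fderiv_eq]
  exact wdwb2 (fun s => pR Ghat s v) hw (sliceR_diff hU (pR_contDiffOn hU hG) hmem)

end derivs

/-- G(w, w̄, v) := Ĝ(ln(w w̄), v) satisfies (alterform)
iff Ĝ satisfies
(Ĝ + Ĝ_{vv} − 2 sin α Ĝ_v) Ĝ_{RR} − (e^{iα} Ĝ_R − i Ĝ_{vR})(e^{−iα} Ĝ_R + i Ĝ_{vR}) = 4 e^R. -/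
theorem alterform_rotational_reduction (α : ℝ) (U₂ : Set (ℝ × ℝ)) (hU₂ : IsOpen U₂)
    (Ghat : ℝ → ℝ → ℝ)
    (hGhat : ContDiffOn ℝ (⊤ : ℕ∞) (fun p : ℝ × ℝ => Ghat p.1 p.2) U₂) :
    (∀ w : ℂ, ∀ v : ℝ, w ≠ 0 → (Real.log (Complex.normSq w), v) ∈ U₂ →
        Alterform α (fun z t => Ghat (Real.log (Complex.normSq z)) t) w v)
    ↔ (∀ R v : ℝ, (R, v) ∈ U₂ →
        (((Ghat R v + pv (pv Ghat) R v - 2 * Real.sin α * pv Ghat R v) : ℝ) : ℂ)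
            * ((pR (pR Ghat) R v : ℝ) : ℂ)
          - (Complex.exp (Complex.I * (α : ℂ)) * ((pR Ghat R v : ℝ) : ℂ)
              - Complex.I * ((pR (pv Ghat) R v : ℝ) : ℂ))
            * (Complex.exp (-(Complex.I * (α : ℂ))) * ((pR Ghat R v : ℝ) : ℂ)
              + Complex.I * ((pR (pv Ghat) R v : ℝ) : ℂ))
          = ((4 * Real.exp R : ℝ) : ℂ)) := by
  constructor
  · intro h R v hmem
    set w : ℂ := ((Real.exp (R / 2) : ℝ) : ℂ) with hw_def
    have hw : w ≠ 0 := by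
      simp only [hw_def, ne_eq, Complex.ofReal_eq_zero]
      exact Real.exp_ne_zero _
    have hNs : Complex.normSq w = Real.exp R := by
      rw [hw_def, Complex.normSq_ofReal, ← Real.exp_add]
      norm_num
    have hlog : Real.log (Complex.normSq w) = R := by rw [hNs, Real.log_exp]
    have hmem' : (Real.log (Complex.normSq w), v) ∈ U₂ := by rw [hlog]; exact hmem
    have halt := h w v hw hmem'
    unfold Alterform at halt
    rw [hd1 hU₂ hGhat hw hmem', hd2 hU₂ hGhat hw hmem', hd3 hU₂ hGhat hmem',
      hd4 hU₂ hGhat hmem', hd5 hU₂ hGhat hw hmem', hd6 hU₂ hGhat hw hmem',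
      hd7 hU₂ hGhat hw hmem'] at halt
    rw [equiv_alg hw] at halt
    rw [hlog] at halt
    have hcast : ((Complex.normSq w : ℝ) : ℂ) = ((Real.exp R : ℝ) : ℂ) := by
      exact_mod_cast congrArg Complex.ofReal hNs
    have hcx : cx (fun z t => Ghat (Real.log (Complex.normSq z)) t) w v
        = ((Ghat R v : ℝ) : ℂ) := by
      simp only [cx, hlog]
    rw [hcx] at halt
    push_cast at halt hcast ⊢
    linear_combination halt + 4 * hcast
  · intro h w v hw hmem
    have hhat := h (Real.log (Complex.normSq w)) v hmem
    unfold Alterform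
    rw [hd1 hU₂ hGhat hw hmem, hd2 hU₂ hGhat hw hmem, hd3 hU₂ hGhat hmem,
      hd4 hU₂ hGhat hmem, hd5 hU₂ hGhat hw hmem, hd6 hU₂ hGhat hw hmem,
      hd7 hU₂ hGhat hw hmem]
    rw [equiv_alg hw]
    have hexp : Real.exp (Real.log (Complex.normSq w)) = Complex.normSq w :=
      Real.exp_log (Complex.normSq_pos.2 hw)
    have hcast : ((Real.exp (Real.log (Complex.normSq w)) : ℝ) : ℂ)
        = ((Complex.normSq w : ℝ) : ℂ) := by exact_mod_cast congrArg Complex.ofReal hexp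
    have hcx : cx (fun z t => Ghat (Real.log (Complex.normSq z)) t) w v
        = ((Ghat (Real.log (Complex.normSq w)) v : ℝ) : ℂ) := rfl
    rw [hcx]
    push_cast at hhat hcast ⊢
    linear_combination hhat + 4 * hcast

end
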